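/- Let (M, d₁, d₂) be a set with two pseudometrics and consider a map F = (F₁, F₂) on a product of complete metric spaces of functions such that the 2-vector of distances contracts: d(F(x), F(y)) ≤ Π · d(x,y) componentwise, where Π is a 2×2 matrix with nonnegative entries and r_σ(Π) < 1. Then F has a unique fixed point. (Generalized Banach fixed point theorem with matrix-valued contraction constant.) -/

import Mathlib

noncomputable def specRad (A : Matrix (Fin 2) (Fin 2) ℝ) : ℝ :=
  (((A.map (Complex.ofReal)).charpoly.roots).map (fun z : ℂ => ‖z‖)).foldr max 0

open Polynomial in
/-- The largest eigenvalue of a nonnegative 2×2 matrix is bounded by `specRad`. -/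
lemma specRad_ge (P : Matrix (Fin 2) (Fin 2) ℝ) (hpos : ∀ i j, 0 ≤ P i j) :
    (P 0 0 + P 1 1 + Real.sqrt ((P 0 0 - P 1 1)^2 + 4 * (P 0 1 * P 1 0))) / 2 ≤ specRad P := by
  set a := P 0 0; set b := P 0 1; set c := P 1 0; set d := P 1 1
  have hdisc : (0:ℝ) ≤ (a - d)^2 + 4 * (b * c) := by
    have := mul_nonneg (hpos 0 1) (hpos 1 0)
    positivity
  set s : ℝ := Real.sqrt ((a - d)^2 + 4 * (b * c)) with hs
  have hs0 : 0 ≤ s := Real.sqrt_nonneg _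
  have hs2 : s ^ 2 = (a - d)^2 + 4 * (b * c) := Real.sq_sqrt hdisc
  set lam1 : ℝ := (a + d + s) / 2
  set lam2 : ℝ := (a + d - s) / 2
  have hfact : (P.map (Complex.ofReal)).charpoly
      = (X - C (lam1 : ℂ)) * (X - C (lam2 : ℂ)) := by
    rw [Matrix.charpoly, Matrix.det_fin_two]
    rw [Matrix.charmatrix_apply_eq, Matrix.charmatrix_apply_eq,
      Matrix.charmatrix_apply_ne _ _ _ (by decide), Matrix.charmatrix_apply_ne _ _ _ (by decide)]
    simp only [Matrix.map_apply]
    have h1 : ((lam1 : ℝ) : ℂ) + ((lam2 : ℝ) : ℂ) = (a : ℂ) + (d : ℂ) := by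
      push_cast
      simp only [lam1, lam2]
      push_cast
      ring
    have h2 : ((lam1 : ℝ) : ℂ) * ((lam2 : ℝ) : ℂ) = (a : ℂ) * (d : ℂ) - (b : ℂ) * (c : ℂ) := by
      have hl : lam1 * lam2 = a * d - b * c := by
        simp only [lam1, lam2]
        nlinarith [hs2]
      rw [← Complex.ofReal_mul, hl, Complex.ofReal_sub, Complex.ofReal_mul,
        Complex.ofReal_mul]
    have expand : ((X : ℂ[X]) - C (a : ℂ)) * (X - C (d : ℂ)) - (-C (b:ℂ)) * (-C (c:ℂ))
        = X^2 - C ((a:ℂ) + (d:ℂ)) * X + C ((a:ℂ)*(d:ℂ) - (b:ℂ)*(c:ℂ)) := by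
      simp only [C_add, C_sub, C_mul]
      ring
    rw [expand, ← h1, ← h2]
    simp only [C_add, C_mul]
    ring
  have hroots : (P.map (Complex.ofReal)).charpoly.roots = {(lam1 : ℂ), (lam2 : ℂ)} := by
    rw [hfact, roots_mul (mul_ne_zero (X_sub_C_ne_zero _) (X_sub_C_ne_zero _)),
      roots_X_sub_C, roots_X_sub_C]
    rfl
  have : specRad P = max ‖(lam1 : ℂ)‖ (max ‖(lam2 : ℂ)‖ 0) := by
    rw [specRad, hroots]
    rfl
  rw [this]
  have habs : ‖(lam1 : ℂ)‖ = |lam1| := by simp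
  calc (a + d + s) / 2 = lam1 := rfl
    _ ≤ |lam1| := le_abs_self _
    _ = ‖(lam1 : ℂ)‖ := habs.symm
    _ ≤ _ := le_max_left _ _

/-- Banach fixed point theorem w.r.t. an auxiliary comparable "distance" `D`. -/
lemma banach_aux {X : Type*} [MetricSpace X] [CompleteSpace X] [Nonempty X]
    (F : X → X) (D : X → X → ℝ) (q cc CC : ℝ) (hq0 : 0 ≤ q) (hq : q < 1)
    (hc : 0 < cc)
    (hlow : ∀ x y, cc * dist x y ≤ D x y)
    (hhigh : ∀ x y, D x y ≤ CC * dist x y)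
    (hco : ∀ x y, D (F x) (F y) ≤ q * D x y) : ∃! z, F z = z := by
  obtain ⟨x₀⟩ := ‹Nonempty X›
  set f : ℕ → X := fun n => F^[n] x₀ with hf
  have hstep : ∀ n, f (n + 1) = F (f n) := by
    intro n; simp [hf, Function.iterate_succ_apply']
  have hgeom : ∀ n, D (f n) (f (n + 1)) ≤ q ^ n * D x₀ (F x₀) := by
    intro n
    induction n with
    | zero => simp [hf]
    | succ n ih =>
      have e1 : f (n+1) = F (f n) := hstep n
      have e2 : f (n+1+1) = F (f (n+1)) := hstep (n+1)
      have hstep2 := hco (f n) (f (n+1))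
      rw [← e1, ← e2] at hstep2
      calc D (f (n+1)) (f (n+1+1)) ≤ q * D (f n) (f (n+1)) := hstep2
        _ ≤ q * (q ^ n * D x₀ (F x₀)) := mul_le_mul_of_nonneg_left ih hq0
        _ = q ^ (n+1) * D x₀ (F x₀) := by ring
  have hdistgeom : ∀ n, dist (f n) (f (n + 1)) ≤ (D x₀ (F x₀) / cc) * q ^ n := by
    intro n
    have h1 := hlow (f n) (f (n+1))
    have h2 := hgeom n
    rw [div_mul_eq_mul_div, le_div_iff₀ hc]
    nlinarith
  have hcauchy : CauchySeq f := cauchySeq_of_le_geometric q _ hq hdistgeom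
  obtain ⟨z, hz⟩ := cauchySeq_tendsto_of_complete hcauchy
  have hd0 : Filter.Tendsto (fun n => dist (f n) z) Filter.atTop (nhds 0) :=
    (tendsto_iff_dist_tendsto_zero.mp hz)
  have hfix : F z = z := by
    have hb : ∀ n, dist (F z) z ≤ q * CC / cc * dist z (f n) + dist (f (n+1)) z := by
      intro n
      have h1 : dist (F z) z ≤ dist (F z) (f (n+1)) + dist (f (n+1)) z := dist_triangle _ _ _
      have h2 : cc * dist (F z) (f (n+1)) ≤ q * (CC * dist z (f n)) := by
        calc cc * dist (F z) (f (n+1)) ≤ D (F z) (f (n+1)) := hlow _ _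
          _ = D (F z) (F (f n)) := by rw [hstep]
          _ ≤ q * D z (f n) := hco _ _
          _ ≤ q * (CC * dist z (f n)) := mul_le_mul_of_nonneg_left (hhigh _ _) hq0
      have h3 : dist (F z) (f (n+1)) ≤ q * CC / cc * dist z (f n) := by
        rw [div_mul_eq_mul_div, le_div_iff₀ hc]
        nlinarith
      linarith
    have hlim : Filter.Tendsto
        (fun n => q * CC / cc * dist z (f n) + dist (f (n+1)) z) Filter.atTop (nhds 0) := by
      have t1 : Filter.Tendsto (fun n => dist z (f n)) Filter.atTop (nhds 0) := by
        simpa [dist_comm] using hd0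
      have t2 : Filter.Tendsto (fun n => dist (f (n+1)) z) Filter.atTop (nhds 0) :=
        hd0.comp (Filter.tendsto_add_atTop_nat 1)
      have := (t1.const_mul (q * CC / cc)).add t2
      simpa using this
    have : dist (F z) z ≤ 0 := ge_of_tendsto hlim (Filter.Eventually.of_forall hb)
    have := le_antisymm this dist_nonneg
    exact dist_eq_zero.mp this
  refine ⟨z, hfix, ?_⟩
  intro w hw
  have h1 : D w z = D (F w) (F z) := by rw [hw, hfix]
  have h2 : D (F w) (F z) ≤ q * D w z := hco _ _
  have h3 : cc * dist w z ≤ D w z := hlow _ _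
  have h4 : 0 ≤ dist w z := dist_nonneg
  have hD0 : D w z ≤ 0 := by nlinarith [h1 ▸ h2]
  have h5 : dist w z = 0 := le_antisymm (by nlinarith) h4
  exact dist_eq_zero.mp h5

set_option maxHeartbeats 1000000 in
/-- generalized Banach fixed point theorem with a matrix-valued
contraction constant: if the 2-vector of distances contracts componentwise by a
nonnegative matrix with spectral radius < 1, then `F` has a unique fixed point. -/
theorem stmt17 {X₁ X₂ : Type*} [MetricSpace X₁] [CompleteSpace X₁] [Nonempty X₁]
    [MetricSpace X₂] [CompleteSpace X₂] [Nonempty X₂]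
    (F : X₁ × X₂ → X₁ × X₂) (P : Matrix (Fin 2) (Fin 2) ℝ)
    (hpos : ∀ i j, 0 ≤ P i j) (hsr : specRad P < 1)
    (hcontr : ∀ x y : X₁ × X₂,
      dist (F x).1 (F y).1 ≤ P 0 0 * dist x.1 y.1 + P 0 1 * dist x.2 y.2 ∧
      dist (F x).2 (F y).2 ≤ P 1 0 * dist x.1 y.1 + P 1 1 * dist x.2 y.2) :
    ∃! z : X₁ × X₂, F z = z := by
  set a := P 0 0 with ha; set b := P 0 1 with hb
  set c := P 1 0 with hc; set d := P 1 1 with hd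
  have ha0 : 0 ≤ a := hpos 0 0
  have hb0 : 0 ≤ b := hpos 0 1
  have hc0 : 0 ≤ c := hpos 1 0
  have hd0 : 0 ≤ d := hpos 1 1
  have hr0 : (a + d + Real.sqrt ((a - d)^2 + 4 * (b * c))) / 2 < 1 :=
    lt_of_le_of_lt (specRad_ge P hpos) hsr
  -- Perturb to a strictly positive matrix with spectral radius still < 1.
  set g : ℝ → ℝ := fun ε =>
    (a + d + 2 * ε + Real.sqrt ((a - d)^2 + 4 * ((b + ε) * (c + ε)))) / 2 with hg
  have hgcont : Continuous g := by
    apply Continuous.div_const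
    apply Continuous.add
    · fun_prop
    · exact Real.continuous_sqrt.comp (by fun_prop)
  have hg00 : g 0 = (a + d + Real.sqrt ((a - d)^2 + 4 * (b * c))) / 2 := by
    simp [hg]
  have hev : ∀ᶠ ε in nhds (0:ℝ), g ε < 1 := by
    have htends : Filter.Tendsto g (nhds 0) (nhds (g 0)) := hgcont.continuousAt (x := (0:ℝ))
    rw [hg00] at htends
    exact htends.eventually_lt_const hr0
  obtain ⟨δ, hδpos, hδ⟩ := Metric.eventually_nhds_iff.mp hev
  obtain ⟨ε, hεpos, hglt⟩ : ∃ ε : ℝ, 0 < ε ∧ g ε < 1 := by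
    refine ⟨δ / 2, by positivity, ?_⟩
    apply hδ
    simp only [Real.dist_eq, sub_zero]
    rw [abs_of_pos (by positivity)]
    linarith
  obtain ⟨S, hS0, hS2, hSlt⟩ : ∃ S : ℝ, 0 ≤ S ∧
      S ^ 2 = (a - d)^2 + 4 * ((b + ε) * (c + ε)) ∧ (a + d + 2 * ε + S) / 2 < 1 := by
    refine ⟨Real.sqrt ((a - d)^2 + 4 * ((b + ε) * (c + ε))), Real.sqrt_nonneg _,
      Real.sq_sqrt (by positivity), ?_⟩
    simpa [hg] using hglt
  obtain ⟨lam, hlam⟩ : ∃ l : ℝ, l = (a + d + 2 * ε + S) / 2 := ⟨_, rfl⟩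
  have hlamlt : lam < 1 := by rw [hlam]; exact hSlt
  have hSgt1 : a - d < S := by
    nlinarith [mul_pos (show (0:ℝ) < b + ε by positivity) (show (0:ℝ) < c + ε by positivity)]
  have hSgt2 : d - a < S := by
    nlinarith [mul_pos (show (0:ℝ) < b + ε by positivity) (show (0:ℝ) < c + ε by positivity)]
  have hlamgt : a + ε < lam := by rw [hlam]; linarith
  obtain ⟨v₁, hv₁⟩ : ∃ v : ℝ, v = b + ε := ⟨_, rfl⟩
  obtain ⟨v₂, hv₂⟩ : ∃ v : ℝ, v = lam - (a + ε) := ⟨_, rfl⟩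
  have hv₁pos : 0 < v₁ := by rw [hv₁]; positivity
  have hv₂pos : 0 < v₂ := by rw [hv₂]; linarith
  have hq0 : 0 ≤ lam := by linarith [hεpos, ha0]
  have key2 : (lam - (a + ε)) * (lam - (d + ε)) = (b + ε) * (c + ε) := by
    rw [hlam]; linear_combination hS2 / 4
  have e1 : (a + ε) * v₁ + (b + ε) * v₂ = lam * v₁ := by
    rw [hv₁, hv₂]; ring
  have e2 : (c + ε) * v₁ + (d + ε) * v₂ = lam * v₂ := by
    rw [hv₁, hv₂]; linear_combination -key2
  have ineq1 : a * v₁ + b * v₂ ≤ lam * v₁ := by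
    nlinarith [mul_pos hεpos hv₁pos, mul_pos hεpos hv₂pos]
  have ineq2 : c * v₁ + d * v₂ ≤ lam * v₂ := by
    nlinarith [mul_pos hεpos hv₁pos, mul_pos hεpos hv₂pos]
  -- set up the comparable distance and apply the auxiliary Banach theorem
  obtain ⟨w₁, hw₁⟩ : ∃ w : ℝ, w = 1 / v₁ := ⟨_, rfl⟩
  obtain ⟨w₂, hw₂⟩ : ∃ w : ℝ, w = 1 / v₂ := ⟨_, rfl⟩
  have hw₁pos : 0 < w₁ := by rw [hw₁]; positivity
  have hw₂pos : 0 < w₂ := by rw [hw₂]; positivity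
  have hvw₁ : v₁ * w₁ = 1 := by rw [hw₁]; field_simp
  have hvw₂ : v₂ * w₂ = 1 := by rw [hw₂]; field_simp
  set D : X₁ × X₂ → X₁ × X₂ → ℝ :=
    fun x y => max (w₁ * dist x.1 y.1) (w₂ * dist x.2 y.2) with hD
  apply banach_aux F D lam (min w₁ w₂) (max w₁ w₂) hq0 hlamlt (lt_min hw₁pos hw₂pos)
  · intro x y
    rw [Prod.dist_eq, hD]
    rcases le_total (dist x.1 y.1) (dist x.2 y.2) with h | h
    · rw [max_eq_right h]
      calc min w₁ w₂ * dist x.2 y.2 ≤ w₂ * dist x.2 y.2 :=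
            mul_le_mul_of_nonneg_right (min_le_right _ _) dist_nonneg
        _ ≤ _ := le_max_right _ _
    · rw [max_eq_left h]
      calc min w₁ w₂ * dist x.1 y.1 ≤ w₁ * dist x.1 y.1 :=
            mul_le_mul_of_nonneg_right (min_le_left _ _) dist_nonneg
        _ ≤ _ := le_max_left _ _
  · intro x y
    rw [Prod.dist_eq, hD]
    apply max_le
    · calc w₁ * dist x.1 y.1 ≤ max w₁ w₂ * dist x.1 y.1 :=
            mul_le_mul_of_nonneg_right (le_max_left _ _) dist_nonneg
        _ ≤ max w₁ w₂ * max (dist x.1 y.1) (dist x.2 y.2) :=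
            mul_le_mul_of_nonneg_left (le_max_left _ _)
              (le_trans hw₁pos.le (le_max_left _ _))
    · calc w₂ * dist x.2 y.2 ≤ max w₁ w₂ * dist x.2 y.2 :=
            mul_le_mul_of_nonneg_right (le_max_right _ _) dist_nonneg
        _ ≤ max w₁ w₂ * max (dist x.1 y.1) (dist x.2 y.2) :=
            mul_le_mul_of_nonneg_left (le_max_right _ _)
              (le_trans hw₁pos.le (le_max_left _ _))
  · intro x y
    obtain ⟨h1, h2⟩ := hcontr x y
    rw [hD]
    have hDxy0 : 0 ≤ D x y :=
      le_trans (mul_nonneg hw₁pos.le dist_nonneg) (le_max_left _ _)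
    have hm1 : w₁ * dist x.1 y.1 ≤ D x y := le_max_left _ _
    have hm2 : w₂ * dist x.2 y.2 ≤ D x y := le_max_right _ _
    have hrw : ∀ dd1 dd2 : ℝ, a * dd1 + b * dd2
        = a * v₁ * (w₁ * dd1) + b * v₂ * (w₂ * dd2) := by
      intro dd1 dd2
      linear_combination (-(a * dd1)) * hvw₁ + (-(b * dd2)) * hvw₂
    have hrw' : ∀ dd1 dd2 : ℝ, c * dd1 + d * dd2
        = c * v₁ * (w₁ * dd1) + d * v₂ * (w₂ * dd2) := by
      intro dd1 dd2
      linear_combination (-(c * dd1)) * hvw₁ + (-(d * dd2)) * hvw₂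
    apply max_le
    · have h3 : dist (F x).1 (F y).1 ≤ (a * v₁ + b * v₂) * D x y := by
        calc dist (F x).1 (F y).1 ≤ a * dist x.1 y.1 + b * dist x.2 y.2 := h1
          _ = a * v₁ * (w₁ * dist x.1 y.1) + b * v₂ * (w₂ * dist x.2 y.2) := hrw _ _
          _ ≤ a * v₁ * D x y + b * v₂ * D x y :=
              add_le_add (mul_le_mul_of_nonneg_left hm1 (mul_nonneg ha0 hv₁pos.le))
                (mul_le_mul_of_nonneg_left hm2 (mul_nonneg hb0 hv₂pos.le))
          _ = (a * v₁ + b * v₂) * D x y := by ring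
      have h4 : dist (F x).1 (F y).1 ≤ lam * v₁ * D x y := by nlinarith
      calc w₁ * dist (F x).1 (F y).1 ≤ w₁ * (lam * v₁ * D x y) :=
            mul_le_mul_of_nonneg_left h4 hw₁pos.le
        _ = lam * D x y := by
            linear_combination (lam * D x y) * hvw₁
    · have h3 : dist (F x).2 (F y).2 ≤ (c * v₁ + d * v₂) * D x y := by
        calc dist (F x).2 (F y).2 ≤ c * dist x.1 y.1 + d * dist x.2 y.2 := h2
          _ = c * v₁ * (w₁ * dist x.1 y.1) + d * v₂ * (w₂ * dist x.2 y.2) := hrw' _ _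
          _ ≤ c * v₁ * D x y + d * v₂ * D x y :=
              add_le_add (mul_le_mul_of_nonneg_left hm1 (mul_nonneg hc0 hv₁pos.le))
                (mul_le_mul_of_nonneg_left hm2 (mul_nonneg hd0 hv₂pos.le))
          _ = (c * v₁ + d * v₂) * D x y := by ring
      have h4 : dist (F x).2 (F y).2 ≤ lam * v₂ * D x y := by nlinarith
      calc w₂ * dist (F x).2 (F y).2 ≤ w₂ * (lam * v₂ * D x y) :=
            mul_le_mul_of_nonneg_left h4 hw₂pos.le
        _ = lam * D x y := by
            linear_combination (lam * D x y) * hvw₂
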